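/- For any positive definite matrices R and S of the same size and any continuous function f on [0,∞), it holds that R^{1/2}(R^{1/2} S R^{1/2})^{-1/2} R^{1/2} = S^{-1/2}(S^{1/2} R S^{1/2})^{1/2} S^{-1/2}. -/

import Mathlib

open Matrix
open scoped ComplexOrder Classical

variable {n : Type*} [Fintype n] [DecidableEq n]

/-- The positive semidefinite square root of a matrix (junk value `0` if not PSD). -/
noncomputable def msqrt (A : Matrix n n ℂ) : Matrix n n ℂ :=
  if h : A.PosSemidef then h.1.eigenvectorUnitary.1 * diagonal ((↑) ∘ (√·) ∘ h.1.eigenvalues) *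
    (star h.1.eigenvectorUnitary : Matrix n n ℂ) else 0

/-- The trace norm `‖M‖₁ = Tr √(Mᴴ M)`. -/
noncomputable def traceNorm (M : Matrix n n ℂ) : ℝ :=
  ((msqrt (Mᴴ * M)).trace).re

/-- The fidelity `F(R,S) = (Tr √(√R S √R))²` of positive semidefinite matrices. -/
noncomputable def fidelity (R S : Matrix n n ℂ) : ℝ :=
  (((msqrt (msqrt R * S * msqrt R)).trace).re) ^ 2

/-- The squared Bures distance `B(R,S)² = Tr R + Tr S - 2 √F(R,S)`. -/
noncomputable def bures2 (R S : Matrix n n ℂ) : ℝ :=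
  (R.trace).re + (S.trace).re - 2 * Real.sqrt (fidelity R S)

/-- The twirling map `𝓔(X) = (1/|G|) ∑ g, U g * X * (U g)ᴴ`. -/
noncomputable def twirl {G : Type*} [Fintype G] (U : G → Matrix n n ℂ)
    (X : Matrix n n ℂ) : Matrix n n ℂ :=
  (Fintype.card G : ℂ)⁻¹ • ∑ g, U g * X * (U g)ᴴ

/-- The maximum eigenvalue of a Hermitian matrix. -/
noncomputable def lamMax {A : Matrix n n ℂ} (hA : A.IsHermitian) : ℝ :=
  ⨆ i, hA.eigenvalues i

/-- The minimum eigenvalue of a Hermitian matrix. -/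
noncomputable def lamMin {A : Matrix n n ℂ} (hA : A.IsHermitian) : ℝ :=
  ⨅ i, hA.eigenvalues i

/-- The fixed point iteration map `K(S) = S^{-1/2} (𝓔((S^{1/2} R S^{1/2})^{1/2}))² S^{-1/2}`. -/
noncomputable def iterMap {G : Type*} [Fintype G] (U : G → Matrix n n ℂ)
    (R S : Matrix n n ℂ) : Matrix n n ℂ :=
  (msqrt S)⁻¹ * (twirl U (msqrt (msqrt S * R * msqrt S))) ^ 2 * (msqrt S)⁻¹

open scoped MatrixOrder in
theorem msqrt_eq_sqrt {A : Matrix n n ℂ} (h : A.PosSemidef) : msqrt A = CFC.sqrt A := by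
  rw [CFC.sqrt_eq_real_sqrt A h.nonneg, cfcₙ_eq_cfc, h.1.cfc_eq, IsHermitian.cfc,
    Unitary.conjStarAlgAut_apply, msqrt, dif_pos h]
  rfl

open scoped MatrixOrder in
theorem msqrt_posSemidef {A : Matrix n n ℂ} (h : A.PosSemidef) : (msqrt A).PosSemidef := by
  rw [msqrt_eq_sqrt h]
  exact nonneg_iff_posSemidef.mp (CFC.sqrt_nonneg A)

open scoped MatrixOrder in
theorem msqrt_mul_self {A : Matrix n n ℂ} (h : A.PosSemidef) : msqrt A * msqrt A = A := by
  rw [msqrt_eq_sqrt h]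
  exact CFC.sqrt_mul_sqrt_self A h.nonneg

open scoped MatrixOrder in
theorem eq_msqrt_of_sq_eq {T M : Matrix n n ℂ} (hT : T.PosSemidef) (hM : M.PosSemidef)
    (h : T ^ 2 = M) : T = msqrt M := by
  rw [msqrt_eq_sqrt hM]
  exact (CFC.sqrt_unique (by rw [← h, sq]) hT.nonneg).symm

/-- for positive definite `R`, `S`,
`R^{1/2} (R^{1/2} S R^{1/2})^{-1/2} R^{1/2} = S^{-1/2} (S^{1/2} R S^{1/2})^{1/2} S^{-1/2}`. -/
theorem sqrt_sandwich_identity (R S : Matrix n n ℂ)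
    (hR : R.PosDef) (hS : S.PosDef) :
    msqrt R * (msqrt (msqrt R * S * msqrt R))⁻¹ * msqrt R =
      (msqrt S)⁻¹ * msqrt (msqrt S * R * msqrt S) * (msqrt S)⁻¹ := by
  set a := msqrt R with ha
  set b := msqrt S with hb
  have haR : a = msqrt R := by rw [ha]
  have hbS : b = msqrt S := by rw [hb]
  have haH : a.IsHermitian := haR ▸ (msqrt_posSemidef hR.posSemidef).1
  have hbH : b.IsHermitian := hbS ▸ (msqrt_posSemidef hS.posSemidef).1
  have haa : a * a = R := haR ▸ msqrt_mul_self hR.posSemidef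
  have hbb : b * b = S := hbS ▸ msqrt_mul_self hS.posSemidef
  have hadet : IsUnit a.det := by
    have : a.det * a.det = R.det := by rw [← det_mul, haa]
    have hRdet : R.det ≠ 0 := ne_of_gt hR.det_pos
    exact isUnit_iff_ne_zero.2 (fun h => hRdet (by rw [← this, h, zero_mul]))
  have hbdet : IsUnit b.det := by
    have : b.det * b.det = S.det := by rw [← det_mul, hbb]
    have hSdet : S.det ≠ 0 := ne_of_gt hS.det_pos
    exact isUnit_iff_ne_zero.2 (fun h => hSdet (by rw [← this, h, zero_mul]))
  -- N = a * S * a is PosSemidef with nonzero det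
  have hNps : (a * S * a).PosSemidef := by
    have := hS.posSemidef.conjTranspose_mul_mul_same a
    rwa [haH.eq] at this
  set c := msqrt (a * S * a) with hc
  have hcN : c = msqrt (a * S * a) := by rw [hc]
  have hcps : c.PosSemidef := hcN ▸ msqrt_posSemidef hNps
  have hcc : c * c = a * S * a := hcN ▸ msqrt_mul_self hNps
  have hcdet : IsUnit c.det := by
    have h1 : c.det * c.det = a.det * S.det * a.det := by
      rw [← det_mul, hcc, det_mul, det_mul]
    have hSdet : S.det ≠ 0 := ne_of_gt hS.det_pos
    refine isUnit_iff_ne_zero.2 (fun h => ?_)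
    rw [h, zero_mul] at h1
    exact (mul_ne_zero (mul_ne_zero hadet.ne_zero hSdet) hadet.ne_zero) h1.symm
  -- T := b * (a * c⁻¹ * a) * b
  have hT2 : (b * (a * c⁻¹ * a) * b) ^ 2 = b * R * b := by
    have habba : a * (b * b) * a = c * c := by rw [hbb, hcc]
    have key : (a * c⁻¹ * a) * (b * b) * (a * c⁻¹ * a) = a * a := by
      calc (a * c⁻¹ * a) * (b * b) * (a * c⁻¹ * a)
          = a * c⁻¹ * (a * (b * b) * a) * c⁻¹ * a := by noncomm_ring
        _ = a * c⁻¹ * (c * c) * c⁻¹ * a := by rw [habba]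
        _ = a * (c⁻¹ * c) * (c * c⁻¹) * a := by noncomm_ring
        _ = a * a := by rw [nonsing_inv_mul _ hcdet, mul_nonsing_inv _ hcdet, mul_one, mul_one]
    calc (b * (a * c⁻¹ * a) * b) ^ 2
        = b * ((a * c⁻¹ * a) * (b * b) * (a * c⁻¹ * a)) * b := by noncomm_ring
      _ = b * (a * a) * b := by rw [key]
      _ = b * R * b := by rw [haa]
  have hTps : (b * (a * c⁻¹ * a) * b).PosSemidef := by
    have hcinv : (c⁻¹).PosSemidef := by
      have h1 := hcps.conjTranspose_mul_mul_same c⁻¹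
      have h2 : (c⁻¹)ᴴ * c * c⁻¹ = c⁻¹ := by
        rw [conjTranspose_nonsing_inv, hcps.1.eq, nonsing_inv_mul _ hcdet, one_mul]
      rwa [h2] at h1
    have := hcinv.mul_mul_conjTranspose_same (b * a)
    have heq : b * a * c⁻¹ * (b * a)ᴴ = b * (a * c⁻¹ * a) * b := by
      rw [conjTranspose_mul, haH.eq, hbH.eq]; noncomm_ring
    rwa [heq] at this
  have hbRb : (b * R * b).PosSemidef := by
    have := hR.posSemidef.conjTranspose_mul_mul_same b
    rwa [hbH.eq] at this
  have hTd : b * (a * c⁻¹ * a) * b = msqrt (b * R * b) := by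
    exact eq_msqrt_of_sq_eq hTps hbRb hT2
  rw [← hTd]
  rw [show b⁻¹ * (b * (a * c⁻¹ * a) * b) * b⁻¹
      = (b⁻¹ * b) * (a * c⁻¹ * a) * (b * b⁻¹) by noncomm_ring,
    nonsing_inv_mul _ hbdet, mul_nonsing_inv _ hbdet, one_mul, mul_one]
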